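/- Let A be a real n×n matrix, let Q and R be symmetric positive definite real n×n matrices, and suppose P₁ is a symmetric positive definite real n×n matrix solving the algebraic Riccati equation A·P₁ + P₁·Aᵀ + Q − P₁·R⁻¹·P₁ = 0; set F = P₁·R⁻¹. Let H be a real N×N matrix all of whose complex eigenvalues have strictly positive real part, and let σ_min > 0 denote the minimum of the real parts of the eigenvalues of H. Then for every real coupling gain c with c ≥ 1/(2·σ_min), the matrix M = I_N ⊗ A − c·(H ⊗ F) is Hurwitz. -/

import Mathlib

open Matrix Kronecker

section KroneckerObserverAux

open Complex ComplexOrder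

variable {n : ℕ}

private lemma map_conjTranspose (S : Matrix (Fin n) (Fin n) ℝ) (hS : S.IsHermitian) :
    ((S.map Complex.ofReal)ᴴ : Matrix (Fin n) (Fin n) ℂ) = S.map Complex.ofReal := by
  rw [← Matrix.conjTranspose_map (f := Complex.ofReal) (by intro a; simp), hS.eq]

private lemma herm_dot (C : Matrix (Fin n) (Fin n) ℂ) (hC : Cᴴ = C) (x w : Fin n → ℂ) :
    star x ⬝ᵥ (C *ᵥ w) = star (C *ᵥ x) ⬝ᵥ w := by
  rw [Matrix.dotProduct_mulVec, Matrix.star_mulVec, hC]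

open scoped MatrixOrder in
private lemma posdef_map_dot {S : Matrix (Fin n) (Fin n) ℝ} (hS : S.PosDef)
    (x : Fin n → ℂ) (hx : x ≠ 0) :
    0 < star x ⬝ᵥ ((S.map Complex.ofReal) *ᵥ x) := by
  have hBB : CFC.sqrt S * CFC.sqrt S = S := CFC.sqrt_mul_sqrt_self S hS.posSemidef.nonneg
  set B := CFC.sqrt S with hBdef
  have hBherm : B.IsHermitian := (CFC.sqrt_nonneg S).posSemidef.1
  have hdetB : IsUnit (B.map Complex.ofReal) := by
    rw [Matrix.isUnit_iff_isUnit_det]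
    show IsUnit (Complex.ofRealHom.mapMatrix B).det
    rw [← RingHom.map_det]
    simp only [isUnit_iff_ne_zero, ne_eq]
    intro h
    have hB0 : B.det = 0 := Complex.ofReal_eq_zero.mp h
    have : S.det = 0 := by rw [← hBB, Matrix.det_mul, hB0, mul_zero]
    exact hS.det_pos.ne' this
  have hmap : S.map Complex.ofReal = B.map Complex.ofReal * B.map Complex.ofReal := by
    rw [← hBB]; exact Matrix.map_mul (f := Complex.ofRealHom)
  set y := (B.map Complex.ofReal) *ᵥ x with hy
  have hy0 : y ≠ 0 := fun h => hx (Matrix.mulVec_injective_iff_isUnit.2 hdetB (by simpa using h))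
  have key : star x ⬝ᵥ ((S.map Complex.ofReal) *ᵥ x) = star y ⬝ᵥ y := by
    rw [hmap, ← Matrix.mulVec_mulVec, hy,
      herm_dot _ (map_conjTranspose B hBherm) x (B.map Complex.ofReal *ᵥ x)]
  rw [key]
  exact Matrix.dotProduct_star_self_pos_iff.2 hy0

private lemma adj_dot (C : Matrix (Fin n) (Fin n) ℂ) (x w : Fin n → ℂ) :
    star x ⬝ᵥ (Cᴴ *ᵥ w) = star (C *ᵥ x) ⬝ᵥ w := by
  rw [Matrix.dotProduct_mulVec, Matrix.star_mulVec]

private lemma posdef_map_isUnit {S : Matrix (Fin n) (Fin n) ℝ} (hS : S.PosDef) :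
    IsUnit (S.map Complex.ofReal) := by
  rw [Matrix.isUnit_iff_isUnit_det]
  show IsUnit (Complex.ofRealHom.mapMatrix S).det
  rw [← RingHom.map_det]
  simp only [isUnit_iff_ne_zero, ne_eq]
  intro h
  exact hS.det_pos.ne' (Complex.ofReal_eq_zero.mp h)

private lemma core (A Q R P₁ : Matrix (Fin n) (Fin n) ℝ)
    (hQ : Q.PosDef) (hR : R.PosDef) (hP : P₁.PosDef)
    (hRic : A * P₁ + P₁ * Aᵀ + Q - P₁ * R⁻¹ * P₁ = 0)
    (s z : ℂ) (hs : 1 ≤ 2 * s.re) (u : Fin n → ℂ) (hu : u ≠ 0)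
    (heq : (A.map Complex.ofReal - s • (P₁ * R⁻¹).map Complex.ofReal) *ᵥ u = z • u) :
    z.re < 0 := by
  have hPu : IsUnit P₁.det := hP.det_pos.ne'.isUnit
  have hP1 : P₁⁻¹ * P₁ = 1 := Matrix.nonsing_inv_mul _ hPu
  have hP2 : P₁ * P₁⁻¹ = 1 := Matrix.mul_nonsing_inv _ hPu
  -- real identities
  have r1 : P₁⁻¹ * (P₁ * R⁻¹) = R⁻¹ := by rw [← Matrix.mul_assoc, hP1, Matrix.one_mul]
  have r2 : (P₁ * R⁻¹)ᴴ * P₁⁻¹ = R⁻¹ := by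
    rw [Matrix.conjTranspose_mul, hR.isHermitian.inv.eq, hP.isHermitian.eq,
      Matrix.mul_assoc, hP2, Matrix.mul_one]
  have r3 : P₁⁻¹ * A + Aᴴ * P₁⁻¹ = R⁻¹ - P₁⁻¹ * Q * P₁⁻¹ := by
    have key : A * P₁ + P₁ * Aᵀ + Q = P₁ * R⁻¹ * P₁ := by
      exact sub_eq_zero.mp hRic
    have e := congrArg (fun X => P₁⁻¹ * X * P₁⁻¹) key
    simp only [Matrix.mul_add, Matrix.add_mul, Matrix.mul_assoc] at e
    rw [hP2, Matrix.nonsing_inv_mul_cancel_left _ _ hPu,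
      Matrix.nonsing_inv_mul_cancel_left _ _ hPu, Matrix.mul_one, Matrix.mul_one,
      ← Matrix.mul_assoc P₁⁻¹ Q P₁⁻¹] at e
    rw [Matrix.conjTranspose_eq_transpose_of_trivial, eq_sub_iff_add_eq]
    exact e
  -- complexify
  set A' : Matrix (Fin n) (Fin n) ℂ := A.map Complex.ofReal with hA'
  set F' : Matrix (Fin n) (Fin n) ℂ := (P₁ * R⁻¹).map Complex.ofReal with hF'
  set P' : Matrix (Fin n) (Fin n) ℂ := P₁⁻¹.map Complex.ofReal with hP'
  set R' : Matrix (Fin n) (Fin n) ℂ := R⁻¹.map Complex.ofReal with hR'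
  set Q' : Matrix (Fin n) (Fin n) ℂ := Q.map Complex.ofReal with hQ'
  set W' : Matrix (Fin n) (Fin n) ℂ := (P₁⁻¹ * Q * P₁⁻¹).map Complex.ofReal with hW'
  have map_mul' : ∀ X Y : Matrix (Fin n) (Fin n) ℝ,
      (X * Y).map Complex.ofReal = X.map Complex.ofReal * Y.map Complex.ofReal :=
    fun X Y => Matrix.map_mul (f := Complex.ofRealHom)
  have hPh : P'ᴴ = P' := map_conjTranspose _ hP.isHermitian.inv
  have c1 : P' * F' = R' := by rw [hP', hF', ← map_mul', r1, hR']
  have c2 : F'ᴴ * P' = R' := by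
    rw [hF', ← Matrix.conjTranspose_map (f := Complex.ofReal) (by intro a; simp),
      hP', ← map_mul', r2, hR']
  have c3 : P' * A' + A'ᴴ * P' = R' - W' := by
    rw [hA', ← Matrix.conjTranspose_map (f := Complex.ofReal) (by intro a; simp),
      hP', ← map_mul', ← map_mul', ← Matrix.map_add _ (by intro a b; push_cast; ring)]
    rw [r3, Matrix.map_sub _ (by intro a b; push_cast; ring), hR', hW']
  set Mc : Matrix (Fin n) (Fin n) ℂ := A' - s • F' with hMc
  have hkey : P' * Mc + Mcᴴ * P' = (1 - (s + star s)) • R' - W' := by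
    have expand : P' * Mc + Mcᴴ * P'
        = (P' * A' + A'ᴴ * P') - s • (P' * F') - star s • (F'ᴴ * P') := by
      rw [hMc, Matrix.conjTranspose_sub, Matrix.conjTranspose_smul, Matrix.mul_sub,
        Matrix.sub_mul, Matrix.mul_smul, Matrix.smul_mul]
      module
    rw [expand, c1, c2, c3]
    module
  -- scalar quantities
  set q := star u ⬝ᵥ (P' *ᵥ u) with hqdef
  set rr := star u ⬝ᵥ (R' *ᵥ u) with hrdef
  set w := star u ⬝ᵥ (W' *ᵥ u) with hwdef
  have hq : 0 < q := posdef_map_dot hP.inv u hu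
  have hr : 0 < rr := posdef_map_dot hR.inv u hu
  have hw : 0 < w := by
    have hy : P' *ᵥ u ≠ 0 := by
      intro h
      exact hu (Matrix.mulVec_injective_iff_isUnit.2 (posdef_map_isUnit hP.inv)
        (by simpa using h))
    have : w = star (P' *ᵥ u) ⬝ᵥ (Q' *ᵥ (P' *ᵥ u)) := by
      rw [hwdef, hW', map_mul', map_mul', ← hP', ← hQ', Matrix.mul_assoc,
        ← Matrix.mulVec_mulVec, herm_dot P' hPh, Matrix.mulVec_mulVec]
    rw [this]
    exact posdef_map_dot hQ _ hy
  have E1 : star u ⬝ᵥ ((P' * Mc) *ᵥ u) = z * q := by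
    rw [← Matrix.mulVec_mulVec, heq, Matrix.mulVec_smul, dotProduct_smul, smul_eq_mul]
  have E2 : star u ⬝ᵥ ((Mcᴴ * P') *ᵥ u) = star z * q := by
    rw [← Matrix.mulVec_mulVec, adj_dot, heq, star_smul, smul_dotProduct, smul_eq_mul]
  have big : z * q + star z * q = (1 - (s + star s)) * rr - w := by
    rw [← E1, ← E2, ← dotProduct_add, ← Matrix.add_mulVec, hkey,
      Matrix.sub_mulVec, Matrix.smul_mulVec, dotProduct_sub,
      dotProduct_smul, smul_eq_mul]
  -- pass to real parts
  rw [Complex.lt_def] at hq hr hw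
  simp only [Complex.zero_re, Complex.zero_im] at hq hr hw
  have hre := congrArg Complex.re big
  simp only [Complex.add_re, Complex.mul_re, Complex.sub_re, Complex.sub_im, Complex.add_im,
    Complex.one_re, Complex.one_im, Complex.star_def, Complex.conj_re, Complex.conj_im,
    ← hq.2, ← hr.2, ← hw.2] at hre
  have hq' := hq.1
  have hr' := hr.1
  have hw' := hw.1
  ring_nf at hre
  nlinarith [hre, hq', hr', hw', hs, mul_pos hq' hr']

end KroneckerObserverAux

/-- A real square matrix is Hurwitz if every eigenvalue of its complexification
has strictly negative real part. -/
def IsHurwitz {m : Type*} [Fintype m] [DecidableEq m] (M : Matrix m m ℝ) : Prop :=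
  ∀ z ∈ spectrum ℂ (M.map Complex.ofReal), z.re < 0

set_option maxHeartbeats 1000000 in
/-- the paper's Lemma 3 combined with its Lemma 2: with
`F = P₁ * R⁻¹` obtained from the algebraic Riccati equation, and `H` a real
matrix whose eigenvalues all have positive real part with minimal real part
`σmin > 0`, the matrix `I_N ⊗ A - c • (H ⊗ F)` is Hurwitz for every coupling
gain `c ≥ 1 / (2 * σmin)`. -/
theorem kronecker_observer_hurwitz {n N : ℕ}
    (A Q R P₁ : Matrix (Fin n) (Fin n) ℝ)
    (hQ : Q.PosDef) (hR : R.PosDef) (hP : P₁.PosDef)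
    (hRic : A * P₁ + P₁ * Aᵀ + Q - P₁ * R⁻¹ * P₁ = 0)
    (H : Matrix (Fin N) (Fin N) ℝ) (σmin : ℝ) (hσpos : 0 < σmin)
    (hσ : IsLeast (Complex.re '' spectrum ℂ (H.map Complex.ofReal)) σmin)
    (c : ℝ) (hc : 1 / (2 * σmin) ≤ c) :
    IsHurwitz ((1 : Matrix (Fin N) (Fin N) ℝ) ⊗ₖ A - c • (H ⊗ₖ (P₁ * R⁻¹))) := by
  intro z hz
  set A' : Matrix (Fin n) (Fin n) ℂ := A.map Complex.ofReal with hA'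
  set F' : Matrix (Fin n) (Fin n) ℂ := (P₁ * R⁻¹).map Complex.ofReal with hF'
  set H' : Matrix (Fin N) (Fin N) ℂ := H.map Complex.ofReal with hH'
  -- the complexified big matrix
  have hmapbig : ((1 ⊗ₖ A - c • (H ⊗ₖ (P₁ * R⁻¹))).map Complex.ofReal
        : Matrix (Fin N × Fin n) (Fin N × Fin n) ℂ)
      = (1 : Matrix (Fin N) (Fin N) ℂ) ⊗ₖ A' - (c : ℂ) • (H' ⊗ₖ F') := by
    ext ⟨i, p⟩ ⟨j, q⟩
    by_cases h : i = j <;>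
      simp [Matrix.map_apply, Matrix.kroneckerMap_apply, Matrix.one_apply, h, hA', hH', hF'] <;>
      push_cast <;> ring
  -- get an eigenvector
  rw [spectrum.mem_iff] at hz
  have hdet : (algebraMap ℂ (Matrix (Fin N × Fin n) (Fin N × Fin n) ℂ) z
      - (1 ⊗ₖ A - c • (H ⊗ₖ (P₁ * R⁻¹))).map Complex.ofReal).det = 0 := by
    by_contra h
    exact hz ((Matrix.isUnit_iff_isUnit_det _).2 (isUnit_iff_ne_zero.2 h))
  obtain ⟨v, hv0, hveq⟩ := Matrix.exists_mulVec_eq_zero_iff.mpr hdet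
  have hMv : ((1 : Matrix (Fin N) (Fin N) ℂ) ⊗ₖ A' - (c : ℂ) • (H' ⊗ₖ F')) *ᵥ v = z • v := by
    rw [← hmapbig]
    have : (algebraMap ℂ (Matrix (Fin N × Fin n) (Fin N × Fin n) ℂ) z) *ᵥ v = z • v := by
      rw [Algebra.algebraMap_eq_smul_one, Matrix.smul_mulVec, Matrix.one_mulVec]
    rw [Matrix.sub_mulVec, this] at hveq
    rw [sub_eq_zero] at hveq
    exact hveq.symm
  -- reshape into a matrix equation
  set X : Matrix (Fin n) (Fin N) ℂ := Matrix.of (fun p i => v (i, p)) with hXdef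
  have hX0 : X ≠ 0 := by
    intro h
    apply hv0
    funext ip
    exact congrFun (congrFun h ip.2) ip.1
  have hXeq : A' * X - (c : ℂ) • (F' * X * H'ᵀ) = z • X := by
    ext p i
    have h1 := congrFun hMv (i, p)
    simp only [Matrix.mulVec, dotProduct, Fintype.sum_prod_type, Matrix.sub_apply,
      Matrix.smul_apply, Matrix.kroneckerMap_apply, Matrix.one_apply, Pi.smul_apply,
      smul_eq_mul, ite_mul, one_mul, zero_mul, sub_mul, Finset.sum_sub_distrib] at h1
    rw [Finset.sum_comm] at h1
    simp only [Finset.sum_ite_eq, Finset.mem_univ, if_true] at h1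
    simp only [Matrix.sub_apply, Matrix.smul_apply, Matrix.mul_apply, Matrix.transpose_apply,
      smul_eq_mul, Matrix.of_apply, hXdef]
    rw [← h1]
    congr 1
    rw [Finset.mul_sum]
    exact Finset.sum_congr rfl fun x _ => by
      rw [Finset.sum_mul, Finset.mul_sum]
      exact Finset.sum_congr rfl fun y _ => by ring
  -- invariant subspace argument
  let L : Matrix (Fin n) (Fin N) ℂ →ₗ[ℂ] Matrix (Fin n) (Fin N) ℂ :=
    { toFun := fun Y => A' * Y - (c : ℂ) • (F' * Y * H'ᵀ) - z • Y
      map_add' := fun Y Z => by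
        simp only [Matrix.mul_add, Matrix.add_mul, smul_add]
        abel
      map_smul' := fun a Y => by
        simp only [Matrix.mul_smul, Matrix.smul_mul, smul_smul, RingHom.id_apply]
        module }
  have hXmem : X ∈ LinearMap.ker L := by
    rw [LinearMap.mem_ker]
    show A' * X - (c : ℂ) • (F' * X * H'ᵀ) - z • X = 0
    rw [hXeq, sub_self]
  let G : Matrix (Fin n) (Fin N) ℂ →ₗ[ℂ] Matrix (Fin n) (Fin N) ℂ :=
    { toFun := fun Y => Y * H'ᵀ
      map_add' := fun Y Z => Matrix.add_mul _ _ _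
      map_smul' := fun a Y => Matrix.smul_mul _ _ _ }
  have hGW : ∀ Y ∈ LinearMap.ker L, G Y ∈ LinearMap.ker L := by
    intro Y hY
    rw [LinearMap.mem_ker] at hY ⊢
    show A' * (Y * H'ᵀ) - (c : ℂ) • (F' * (Y * H'ᵀ) * H'ᵀ) - z • (Y * H'ᵀ) = 0
    have hre : A' * (Y * H'ᵀ) - (c : ℂ) • (F' * (Y * H'ᵀ) * H'ᵀ) - z • (Y * H'ᵀ)
        = (A' * Y - (c : ℂ) • (F' * Y * H'ᵀ) - z • Y) * H'ᵀ := by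
      simp only [Matrix.sub_mul, Matrix.smul_mul, Matrix.mul_assoc]
    have hY' : A' * Y - (c : ℂ) • (F' * Y * H'ᵀ) - z • Y = 0 := hY
    rw [hre, hY', Matrix.zero_mul]
  let Φ := G.restrict hGW
  haveI : Nontrivial (LinearMap.ker L) :=
    nontrivial_of_ne ⟨X, hXmem⟩ 0 (by simp only [ne_eq, Submodule.mk_eq_zero]; exact hX0)
  obtain ⟨μ, hμ⟩ := Module.End.exists_eigenvalue Φ
  obtain ⟨Yv, hYv⟩ := hμ.exists_hasEigenvector
  set Y : Matrix (Fin n) (Fin N) ℂ := (Yv : Matrix (Fin n) (Fin N) ℂ) with hYdef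
  have hY0 : Y ≠ 0 := fun h => hYv.2 (Subtype.ext h)
  have hYH : Y * H'ᵀ = μ • Y := by
    have h5 := hYv.apply_eq_smul
    have := congrArg Subtype.val h5
    simpa [Φ, G, LinearMap.restrict_apply] using this
  have hYmem : A' * Y - (c : ℂ) • (F' * Y * H'ᵀ) - z • Y = 0 := Yv.2
  have hYeq : (A' - ((c : ℂ) * μ) • F') * Y = z • Y := by
    rw [Matrix.mul_assoc F', hYH, Matrix.mul_smul, smul_smul] at hYmem
    rw [Matrix.sub_mul, Matrix.smul_mul, sub_eq_iff_eq_add]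
    rw [sub_sub, sub_eq_zero] at hYmem
    rw [hYmem, add_comm]
  -- μ is an eigenvalue of H'
  have hμspec : μ ∈ spectrum ℂ H' := by
    rw [spectrum.mem_iff]
    intro hunit
    have hT : ((algebraMap ℂ (Matrix (Fin N) (Fin N) ℂ)) μ - H'ᵀ)ᵀ
        = (algebraMap ℂ (Matrix (Fin N) (Fin N) ℂ)) μ - H' := by
      rw [Matrix.transpose_sub, Matrix.transpose_transpose, Algebra.algebraMap_eq_smul_one,
        Matrix.transpose_smul, Matrix.transpose_one, ← Algebra.algebraMap_eq_smul_one]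
    have hunitT : IsUnit ((algebraMap ℂ (Matrix (Fin N) (Fin N) ℂ)) μ - H'ᵀ) := by
      rw [Matrix.isUnit_iff_isUnit_det] at hunit ⊢
      rw [← Matrix.det_transpose, hT]
      exact hunit
    have h3 : Y * ((algebraMap ℂ (Matrix (Fin N) (Fin N) ℂ)) μ - H'ᵀ) = 0 := by
      rw [Algebra.algebraMap_eq_smul_one, Matrix.mul_sub, Matrix.mul_smul, Matrix.mul_one,
        hYH, sub_self]
    apply hY0
    calc Y = Y * ((hunitT.unit : Matrix (Fin N) (Fin N) ℂ)
            * ((hunitT.unit⁻¹ : (Matrix (Fin N) (Fin N) ℂ)ˣ) : Matrix (Fin N) (Fin N) ℂ)) := by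
          rw [hunitT.unit.mul_inv, Matrix.mul_one]
    _ = (Y * (hunitT.unit : Matrix (Fin N) (Fin N) ℂ))
            * ((hunitT.unit⁻¹ : (Matrix (Fin N) (Fin N) ℂ)ˣ) : Matrix (Fin N) (Fin N) ℂ) := by
          rw [Matrix.mul_assoc]
    _ = 0 := by rw [IsUnit.unit_spec, h3, Matrix.zero_mul]
  have hμre : σmin ≤ μ.re := hσ.2 ⟨μ, hμspec, rfl⟩
  -- extract a nonzero column
  have hex : ∃ p i, Y p i ≠ 0 := by
    by_contra h
    push_neg at h
    exact hY0 (by ext p i; exact h p i)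
  obtain ⟨p₀, i₀, hpi⟩ := hex
  set u : Fin n → ℂ := fun p => Y p i₀ with hu
  have hu0 : u ≠ 0 := fun h => hpi (congrFun h p₀)
  have hueq : (A.map Complex.ofReal - ((c : ℂ) * μ) • (P₁ * R⁻¹).map Complex.ofReal) *ᵥ u
      = z • u := by
    funext p
    have h6 := congrFun (congrFun hYeq p) i₀
    simp only [Matrix.mul_apply, Matrix.sub_apply, Matrix.smul_apply, smul_eq_mul] at h6
    simp only [Matrix.mulVec, dotProduct, Pi.smul_apply, smul_eq_mul, hu,
      Matrix.sub_apply, Matrix.smul_apply, ← hA', ← hF']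
    exact h6
  -- gain bound
  have hc0 : 0 < c := lt_of_lt_of_le (by positivity) hc
  have h2c : 1 ≤ 2 * σmin * c := by
    rw [div_le_iff₀ (by positivity)] at hc
    linarith
  have hs : 1 ≤ 2 * ((c : ℂ) * μ).re := by
    have hre' : ((c : ℂ) * μ).re = c * μ.re := by simp [Complex.mul_re]
    rw [hre']
    have h7 : σmin * c ≤ μ.re * c := mul_le_mul_of_nonneg_right hμre hc0.le
    have h8 : μ.re * c = c * μ.re := mul_comm _ _
    linarith
  exact core A Q R P₁ hQ hR hP hRic ((c : ℂ) * μ) z hs u hu0 hueq
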